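/- For every real x > 1 and every integer n ≥ 3, x² + (n − x)²/(x − 1) ≥ (1/4)·((2n² − 4n + 1) + √((2n² − 4n + 1)² − 1))^{2/3}, i.e., the function l_n(x) = x² + (n−x)²/(x−1) on (1,∞) is bounded below by 1/(4 D_n²) where D_n = ((2n²−4n+1) − √((2n²−4n+1)²−1))^{1/3}. -/

import Mathlib

/-- Key polynomial estimate: for `m ≥ 2`, `t > 0`,
`m⁴ ≤ 4 ((1+t)² + (m−t)²/t)³`. -/
lemma stmt_15_key (m t : ℝ) (hm : 2 ≤ m) (ht : 0 < t) :
    m ^ 4 ≤ 4 * ((1 + t) ^ 2 + (m - t) ^ 2 / t) ^ 3 := by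
  obtain ⟨s, hs⟩ : ∃ s : ℝ, s = m - t := ⟨_, rfl⟩
  rw [← hs]
  obtain ⟨f, hf⟩ : ∃ f : ℝ, f = (1 + t) ^ 2 + s ^ 2 / t := ⟨_, rfl⟩
  rw [← hf]
  rcases le_or_gt (m / 2) s with hcase | hcase
  · -- AM-GM case
    obtain ⟨u, hu⟩ : ∃ u : ℝ, u = (1 + t) ^ 2 := ⟨_, rfl⟩
    obtain ⟨v, hv⟩ : ∃ v : ℝ, v = s ^ 2 / (2 * t) := ⟨_, rfl⟩
    have hfuv : f = u + 2 * v := by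
      rw [hf, hu, hv]; field_simp
    have hv0 : 0 ≤ v := by rw [hv]; positivity
    have hu0 : (0:ℝ) ≤ u := by rw [hu]; positivity
    have hut : t ^ 2 ≤ u := by rw [hu]; nlinarith
    have hamgm : 27 * (u * v ^ 2) ≤ (u + 2 * v) ^ 3 := by
      nlinarith [mul_nonneg (sq_nonneg (u - v)) (by linarith : (0:ℝ) ≤ u + 8 * v)]
    have hv2 : t ^ 2 * v ^ 2 = s ^ 4 / 4 := by
      rw [hv]; field_simp; ring
    have huv : s ^ 4 / 4 ≤ u * v ^ 2 := by
      rw [← hv2]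
      exact mul_le_mul_of_nonneg_right hut (sq_nonneg v)
    have hs1 : (1:ℝ) ≤ s := by rw [hs] at hcase ⊢; linarith
    have hs2 : m ^ 2 ≤ 4 * s ^ 2 := by nlinarith
    have hs4 : m ^ 4 / 16 ≤ s ^ 4 := by
      have h16 : m ^ 2 * m ^ 2 ≤ 4 * s ^ 2 * (4 * s ^ 2) :=
        mul_le_mul hs2 hs2 (sq_nonneg m) (by positivity)
      nlinarith [h16]
    have hmain : 27 * (m ^ 4 / 16) / 4 ≤ (u + 2 * v) ^ 3 := by
      calc 27 * (m ^ 4 / 16) / 4 ≤ 27 * (s ^ 4 / 4) := by linarith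
        _ ≤ 27 * (u * v ^ 2) := by linarith
        _ ≤ (u + 2 * v) ^ 3 := hamgm
    rw [hfuv]
    nlinarith [hmain]
  · -- large x case
    have htm : m / 2 < t := by rw [hs] at hcase; linarith
    have hsq : (1 + m / 2) ^ 2 ≤ (1 + t) ^ 2 := by nlinarith
    have hdiv : 0 ≤ s ^ 2 / t := by positivity
    have hfge : (1 + m / 2) ^ 2 ≤ f := by rw [hf]; linarith
    have hcube : ((1 + m / 2) ^ 2) ^ 3 ≤ f ^ 3 :=
      pow_le_pow_left₀ (by positivity) hfge 3
    have hm0 : (0:ℝ) ≤ m := by linarith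
    have hA : 2 * m ≤ (1 + m / 2) ^ 2 := by nlinarith [sq_nonneg (1 - m / 2)]
    have hB : m ^ 2 / 4 ≤ (1 + m / 2) ^ 2 := by nlinarith
    have h1 : 2 * m * (m ^ 2 / 4) ≤ (1 + m / 2) ^ 2 * (1 + m / 2) ^ 2 :=
      mul_le_mul hA hB (by positivity) (by positivity)
    have h2 : 2 * m * (m ^ 2 / 4) * (m ^ 2 / 4) ≤
        (1 + m / 2) ^ 2 * (1 + m / 2) ^ 2 * (1 + m / 2) ^ 2 :=
      mul_le_mul h1 hB (by positivity) (by positivity)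
    have h3 : m ^ 4 ≤ 4 * ((1 + m / 2) ^ 2) ^ 3 := by nlinarith [h2, pow_nonneg hm0 4]
    linarith [hcube, h3]

/-- For integer `n ≥ 3` and real `x > 1`,
`x² + (n − x)²/(x − 1) ≥ (1/4) ((2n² − 4n + 1) + √((2n² − 4n + 1)² − 1))^(2/3)`. -/
theorem stmt_15 (n : ℕ) (hn : 3 ≤ n) (x : ℝ) (hx : 1 < x) :
    (1 / 4) * ((2 * (n : ℝ) ^ 2 - 4 * n + 1) +
        Real.sqrt ((2 * (n : ℝ) ^ 2 - 4 * n + 1) ^ 2 - 1)) ^ ((2 : ℝ) / 3) ≤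
      x ^ 2 + ((n : ℝ) - x) ^ 2 / (x - 1) := by
  set a : ℝ := 2 * (n : ℝ) ^ 2 - 4 * n + 1 with ha
  have hn3 : (3:ℝ) ≤ (n:ℝ) := by exact_mod_cast hn
  have ha7 : (7:ℝ) ≤ a := by rw [ha]; nlinarith
  set m : ℝ := (n : ℝ) - 1 with hm
  have hm2 : (2:ℝ) ≤ m := by rw [hm]; linarith
  have hsqrt : Real.sqrt (a ^ 2 - 1) ≤ a := by
    have h1 : a ^ 2 - 1 ≤ a ^ 2 := by linarith [sq_nonneg a]
    calc Real.sqrt (a ^ 2 - 1) ≤ Real.sqrt (a ^ 2) := Real.sqrt_le_sqrt h1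
      _ = a := Real.sqrt_sq (by linarith)
  have hM0 : 0 ≤ a + Real.sqrt (a ^ 2 - 1) := by
    have := Real.sqrt_nonneg (a ^ 2 - 1); linarith
  have hM : a + Real.sqrt (a ^ 2 - 1) ≤ 4 * m ^ 2 := by
    have : 2 * a ≤ 4 * m ^ 2 := by rw [ha, hm]; nlinarith
    linarith
  set f : ℝ := x ^ 2 + ((n : ℝ) - x) ^ 2 / (x - 1) with hf
  have hf0 : 0 ≤ f := by
    rw [hf]; have : 0 < x - 1 := by linarith
    positivity
  -- key polynomial bound
  have hkey : (4 * m ^ 2) ^ 2 ≤ (4 * f) ^ 3 := by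
    have ht : 0 < x - 1 := by linarith
    have h := stmt_15_key m (x - 1) hm2 ht
    have hfx : f = (1 + (x - 1)) ^ 2 + (m - (x - 1)) ^ 2 / (x - 1) := by
      rw [hf, hm]; ring_nf
    rw [hfx]
    nlinarith [h]
  -- rpow manipulation
  have h4m0 : (0:ℝ) ≤ 4 * m ^ 2 := by positivity
  have h4f0 : (0:ℝ) ≤ 4 * f := by linarith
  have step1 : (a + Real.sqrt (a ^ 2 - 1)) ^ ((2:ℝ)/3) ≤ (4 * m ^ 2) ^ ((2:ℝ)/3) :=
    Real.rpow_le_rpow hM0 hM (by norm_num)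
  have step2 : (4 * m ^ 2) ^ ((2:ℝ)/3) ≤ 4 * f := by
    have e1 : (4 * m ^ 2) ^ ((2:ℝ)/3) = ((4 * m ^ 2) ^ (2:ℕ)) ^ ((1:ℝ)/3) := by
      rw [← Real.rpow_natCast (4 * m ^ 2) 2, ← Real.rpow_mul h4m0]
      norm_num
    have e2 : (4 * f) = ((4 * f) ^ (3:ℕ)) ^ ((1:ℝ)/3) := by
      rw [← Real.rpow_natCast (4 * f) 3, ← Real.rpow_mul h4f0]
      norm_num
    rw [e1, e2]
    exact Real.rpow_le_rpow (by positivity) (by exact_mod_cast hkey) (by norm_num)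
  linarith [step1, step2]
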